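/- For words w₀, w₁ : List Bool, w₁ is reachable from w₀ if and only if: w₀ and w₁ have the same length, the same total number of `true` entries, and for every m, the number of `true` entries among the first m entries of w₁ is at most the number of `true` entries among the first m entries of w₀. -/

import Mathlib

/-- A single pawn move: a pawn (`true`) advances one square rightward into an
empty square (`false`). -/
def PawnMove (w₀ w₁ : List Bool) : Prop :=
  ∃ u v : List Bool, w₀ = u ++ [true, false] ++ v ∧ w₁ = u ++ [false, true] ++ v

/-- Reachability: the reflexive-transitive closure of the single-move relation. -/
def Reach : List Bool → List Bool → Prop :=
  Relation.ReflTransGen PawnMove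

/-- The `ZMod 2` pairing `⟨w₀|w₁⟩`: `1` if `w₁` is reachable from `w₀`, else `0`. -/
noncomputable def pairing (w₀ w₁ : List Bool) : ZMod 2 :=
  open Classical in if Reach w₀ w₁ then 1 else 0

lemma Reach.cons (b : Bool) {u v : List Bool} (h : Reach u v) : Reach (b::u) (b::v) := by
  induction h with
  | refl => exact .refl
  | tail _ hm ih =>
    rcases hm with ⟨x, y, hx, hy⟩
    exact ih.tail ⟨b::x, y, by simp [hx], by simp [hy]⟩

lemma reach_lead (k : ℕ) (r : List Bool) :
    Reach (List.replicate (k+1) true ++ false :: r)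
          (false :: (List.replicate k true ++ true :: r)) := by
  induction k generalizing r with
  | zero =>
    exact Relation.ReflTransGen.single ⟨[], r, by simp, by simp⟩
  | succ k ih =>
    have h1 : Reach (true :: (List.replicate (k+1) true ++ false :: r))
        (true :: (false :: (List.replicate k true ++ true :: r))) := (ih r).cons true
    have h2 : PawnMove (true :: (false :: (List.replicate k true ++ true :: r)))
        (false :: (true :: (List.replicate k true ++ true :: r))) :=
      ⟨[], List.replicate k true ++ true :: r, by simp, by simp⟩
    have := h1.tail h2
    simpa [List.replicate_succ, Reach] using this

lemma count_take_append (u s : List Bool) (m : ℕ) :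
    ((u ++ s).take m).count true
      = (u.take m).count true + (s.take (m - u.length)).count true := by
  rw [List.take_append, List.count_append]

lemma take_pair_le (j : ℕ) (v : List Bool) :
    ((([false, true] : List Bool) ++ v).take j).count true ≤
      ((([true, false] : List Bool) ++ v).take j).count true := by
  match j with
  | 0 => simp
  | 1 => simp
  | (n+2) => simp [List.count_cons]

lemma pawnmove_counts {w₀ w₁ : List Bool} (h : PawnMove w₀ w₁) :
    w₀.length = w₁.length ∧ w₀.count true = w₁.count true ∧
    ∀ m, (w₁.take m).count true ≤ (w₀.take m).count true := by
  rcases h with ⟨u, v, rfl, rfl⟩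
  refine ⟨by simp, by simp [List.count_append], ?_⟩
  intro m
  rw [List.append_assoc, List.append_assoc]
  rw [count_take_append u ([false, true] ++ v) m, count_take_append u ([true, false] ++ v) m]
  exact Nat.add_le_add le_rfl (take_pair_le _ v)

lemma exists_false_block (l : List Bool) (h : l.count true < l.length) :
    ∃ k r, l = List.replicate k true ++ false :: r := by
  induction l with
  | nil => simp at h
  | cons b t ih =>
    cases b with
    | false => exact ⟨0, t, rfl⟩
    | true =>
      simp [List.count_cons] at h
      obtain ⟨k, r, hk⟩ := ih (by simpa using h)
      exact ⟨k+1, r, by simp [List.replicate_succ, hk]⟩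

lemma counts_reach : ∀ n (w₀ w₁ : List Bool), w₀.length ≤ n →
    w₀.length = w₁.length → w₀.count true = w₁.count true →
    (∀ m, (w₁.take m).count true ≤ (w₀.take m).count true) → Reach w₀ w₁ := by
  intro n
  induction n with
  | zero =>
    intro w₀ w₁ h hl _ _
    have h0 : w₀ = [] := List.length_eq_zero_iff.mp (Nat.le_zero.mp h)
    have h1 : w₁ = [] := List.length_eq_zero_iff.mp (by omega)
    subst h0; subst h1; exact .refl
  | succ n ih =>
    intro w₀ w₁ h hl hc hpre
    match w₀, w₁ with
    | [], w₁ =>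
      have h1 : w₁ = [] := List.length_eq_zero_iff.mp (by simpa using hl.symm)
      subst h1; exact .refl
    | b::t₀, [] => simp at hl
    | b::t₀, c::t₁ =>
      have hlen : t₀.length = t₁.length := by simpa using hl
      have hle : t₀.length ≤ n := by simpa using h
      have h1 := hpre 1
      simp [List.count_cons] at h1
      cases c with
      | true =>
        cases b with
        | false => simp at h1
        | true =>
          refine (ih t₀ t₁ hle hlen ?_ ?_).cons true
          · simp [List.count_cons] at hc; omega
          · intro m
            have h2 := hpre (m+1)
            simpa [List.count_cons] using h2
      | false =>
        cases b with
        | false =>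
          refine (ih t₀ t₁ hle hlen ?_ ?_).cons false
          · simpa [List.count_cons] using hc
          · intro m
            have h2 := hpre (m+1)
            simpa [List.count_cons] using h2
        | true =>
          -- move case
          have hcount : t₁.count true = t₀.count true + 1 := by
            simp [List.count_cons] at hc; omega
          have hfalse : t₀.count true < t₀.length := by
            have := List.count_le_length (a := true) (l := t₁)
            omega
          obtain ⟨k, r, rfl⟩ := exists_false_block t₀ hfalse
          have hR1 : Reach (true :: (List.replicate k true ++ false :: r))
              (false :: (List.replicate k true ++ true :: r)) := by
            simpa [List.replicate_succ] using reach_lead k r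
          refine hR1.trans ((ih (List.replicate k true ++ true :: r) t₁ ?_ ?_ ?_ ?_).cons false)
          · simp at hle ⊢; omega
          · simp at hlen ⊢; omega
          · simp [List.count_append, List.count_replicate, List.count_cons] at hcount ⊢
            omega
          · intro m
            rcases le_or_gt m k with hm | hm
            · have hcalc : (t₁.take m).count true ≤ m :=
                le_trans (List.count_le_length) (by simpa using List.length_take_le m t₁)
              rw [List.take_append_of_le_length (by simpa using hm),
                List.take_replicate, min_eq_left hm]
              simpa using hcalc
            · have h5 := hpre (m+1)
              obtain ⟨j, hj⟩ : ∃ j, m - List.length (List.replicate k true) = j + 1 :=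
                ⟨m - k - 1, by simp; omega⟩
              rw [List.take_succ_cons, List.take_succ_cons] at h5
              simp only [List.count_cons, count_take_append, hj,
                List.take_succ_cons] at h5 ⊢
              simp at h5 ⊢
              omega

/-- `w₁` is reachable from `w₀` iff the words have the same length, the same
number of pawns, and every prefix of `w₁` has at most as many pawns as the
corresponding prefix of `w₀`. -/
theorem reach_iff_counts (w₀ w₁ : List Bool) :
    Reach w₀ w₁ ↔
      w₀.length = w₁.length ∧
      w₀.count true = w₁.count true ∧
      ∀ m : ℕ, (w₁.take m).count true ≤ (w₀.take m).count true := by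
  constructor
  · intro h
    induction h with
    | refl => exact ⟨rfl, rfl, fun m => le_rfl⟩
    | tail _ hm ih =>
      obtain ⟨l1, c1, p1⟩ := ih
      obtain ⟨l2, c2, p2⟩ := pawnmove_counts hm
      exact ⟨l1.trans l2, c1.trans c2, fun m => (p2 m).trans (p1 m)⟩
  · rintro ⟨hl, hc, hp⟩
    exact counts_reach w₀.length w₀ w₁ le_rfl hl hc hp
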